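/- The set of derivations of the Leibniz algebra L₃ is a linear subspace of End(V) of dimension 5. -/
import Mathlib

set_option maxHeartbeats 1000000

/-- `V = ℂ⁴`. -/
abbrev V : Type := Fin 4 → ℂ

/-- standard basis: `e 0 = e₁`, ..., `e 3 = e₄`. -/
def e (i : Fin 4) : V := Pi.single i 1

/-- Bracket of the Leibniz algebra `L₃`:
`⟦e₁,e₁⟧ = e₃`, `⟦e₂,e₁⟧ = e₃`, `⟦e₃,e₁⟧ = e₄`, all other basis products zero. -/
def br (x y : V) : V :=
  (x 0 * y 0 + x 1 * y 0) • e 2 + (x 2 * y 0) • e 3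

/-- A derivation. -/
def IsDer (d : V →ₗ[ℂ] V) : Prop :=
  ∀ x y : V, d (br x y) = br (d x) y + br x (d y)

/-- The general derivation, parametrized by 5 coefficients. -/
noncomputable def gmap : (Fin 5 → ℂ) →ₗ[ℂ] (V →ₗ[ℂ] V) where
  toFun c :=
    { toFun := fun x => ![c 0 * x 0,
        c 1 * x 0 + (c 0 + c 1) * x 1,
        c 2 * (x 0 + x 1) + (2 * c 0 + c 1) * x 2,
        c 3 * x 0 + c 4 * x 1 + c 2 * x 2 + (3 * c 0 + c 1) * x 3]
      map_add' := by intro x y; funext k; fin_cases k <;> simp <;> ring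
      map_smul' := by intro m x; funext k; fin_cases k <;> simp [smul_eq_mul] <;> ring }
  map_add' := by
    intro c d; refine LinearMap.ext fun x => funext fun k => ?_
    fin_cases k <;> simp <;> ring
  map_smul' := by
    intro m c; refine LinearMap.ext fun x => funext fun k => ?_
    fin_cases k <;> simp [smul_eq_mul] <;> ring

lemma isDer_gmap (c : Fin 5 → ℂ) : IsDer (gmap c) := by
  intro x y
  funext k
  fin_cases k <;>
    simp [gmap, br, e, Pi.single_apply] <;> ring

/-- Extract the 5 parameters from an endomorphism. -/
noncomputable def fmap : (V →ₗ[ℂ] V) →ₗ[ℂ] (Fin 5 → ℂ) where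
  toFun d := ![d (e 0) 0, d (e 0) 1, d (e 0) 2, d (e 0) 3, d (e 1) 3]
  map_add' := by intro d1 d2; funext j; fin_cases j <;> simp
  map_smul' := by intro m d; funext j; fin_cases j <;> simp

lemma gmap_fmap (d : V →ₗ[ℂ] V) (hd : IsDer d) : gmap (fmap d) = d := by
  have hb1 : br (e 0) (e 0) = e 2 := by
    funext k; fin_cases k <;> simp [br, e, Pi.single_apply]
  have hb2 : br (e 1) (e 0) = e 2 := by
    funext k; fin_cases k <;> simp [br, e, Pi.single_apply]
  have hb3 : br (e 0) (e 1) = 0 := by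
    funext k; fin_cases k <;> simp [br, e, Pi.single_apply]
  have hb4 : br (e 2) (e 0) = e 3 := by
    funext k; fin_cases k <;> simp [br, e, Pi.single_apply]
  have H1 : d (e 2) = br (d (e 0)) (e 0) + br (e 0) (d (e 0)) := by
    rw [← hb1]; exact hd _ _
  have H2 : d (e 2) = br (d (e 1)) (e 0) + br (e 1) (d (e 0)) := by
    rw [← hb2]; exact hd _ _
  have H3 : (0 : V) = br (d (e 0)) (e 1) + br (e 0) (d (e 1)) := by
    have h := hd (e 0) (e 1); rwa [hb3, map_zero] at h
  have H4 : d (e 3) = br (d (e 2)) (e 0) + br (e 2) (d (e 0)) := by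
    rw [← hb4]; exact hd _ _
  have c1_0 := congrFun H1 0
  have c1_1 := congrFun H1 1
  have c1_2 := congrFun H1 2
  have c1_3 := congrFun H1 3
  have c2_2 := congrFun H2 2
  have c2_3 := congrFun H2 3
  have c3_2 := congrFun H3 2
  have c4_0 := congrFun H4 0
  have c4_1 := congrFun H4 1
  have c4_2 := congrFun H4 2
  have c4_3 := congrFun H4 3
  simp only [br, e, Pi.single_apply] at c1_0 c1_1 c1_2 c1_3 c2_2 c2_3 c3_2 c4_0 c4_1 c4_2 c4_3
  simp at c1_0 c1_1 c1_2 c1_3 c2_2 c2_3 c3_2 c4_0 c4_1 c4_2 c4_3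
  have hB0 : d (Pi.single 1 1) 0 = 0 := c3_2.symm
  have hB1 : d (Pi.single 1 1) 1 = d (Pi.single 0 1) 0 + d (Pi.single 0 1) 1 := by
    linear_combination c1_2 - c2_2 - hB0
  have hB2 : d (Pi.single 1 1) 2 = d (Pi.single 0 1) 2 := by
    linear_combination c1_3 - c2_3
  have hC2 : d (Pi.single 2 1) 2 = 2 * d (Pi.single 0 1) 0 + d (Pi.single 0 1) 1 := by
    linear_combination c1_2
  have hD2 : d (Pi.single 3 1) 2 = 0 := by
    linear_combination c4_2 + c1_0 + c1_1
  have hD3 : d (Pi.single 3 1) 3 = 3 * d (Pi.single 0 1) 0 + d (Pi.single 0 1) 1 := by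
    linear_combination c4_3 + c1_2
  apply (Pi.basisFun ℂ (Fin 4)).ext
  intro i
  have hbasis : (Pi.basisFun ℂ (Fin 4)) i = Pi.single i 1 := by
    simp [Pi.basisFun_apply]
  rw [hbasis]
  funext k
  fin_cases i <;> fin_cases k <;>
    simp [gmap, fmap, e, Pi.single_apply, hB0, hB1, hB2, hC2, hD2, hD3,
      c1_0, c1_1, c1_3, c4_0, c4_1]

/-- The submodule of derivations. -/
noncomputable def derS : Submodule ℂ (V →ₗ[ℂ] V) where
  carrier := {d | IsDer d}
  zero_mem' := by
    intro x y
    simp [br]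
  add_mem' := by
    intro d1 d2 h1 h2 x y
    have e1 := h1 x y
    have e2 := h2 x y
    funext k
    have e1k := congrFun e1 k
    have e2k := congrFun e2 k
    simp only [br, LinearMap.add_apply, Pi.add_apply, Pi.smul_apply, smul_eq_mul] at *
    linear_combination e1k + e2k
  smul_mem' := by
    intro m d h x y
    have e1 := h x y
    funext k
    have e1k := congrFun e1 k
    simp only [br, LinearMap.smul_apply, Pi.add_apply, Pi.smul_apply, smul_eq_mul] at *
    linear_combination m * e1k

theorem derivations_of_L3 :
    ∃ S : Submodule ℂ (V →ₗ[ℂ] V),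
      (S : Set (V →ₗ[ℂ] V)) = {d | IsDer d} ∧ Module.finrank ℂ S = 5 := by
  refine ⟨derS, rfl, ?_⟩
  have equiv : derS ≃ₗ[ℂ] (Fin 5 → ℂ) := by
    refine LinearEquiv.ofLinear (fmap.comp derS.subtype)
      (LinearMap.codRestrict derS gmap fun c => isDer_gmap c) ?_ ?_
    · apply LinearMap.ext
      intro c
      funext j
      fin_cases j <;> simp [gmap, fmap, e, Pi.single_apply]
    · apply LinearMap.ext
      intro d
      exact Subtype.ext (gmap_fmap d d.2)
  rw [LinearEquiv.finrank_eq equiv]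
  simp
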